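/- For the uniform kernel K(u) = (1/2)·1_{|u|<1} and polynomial order p = 1 (interior point), the RBC equivalent kernel is w_RBC(u) = (9/8 − (15/8)u²)·1_{|u|<1}, and ∫ w_RBC(u)² du = 9/8. Combined with K_PLP = 5/6 for the same kernel, it follows that K_PLP < K_RBC, i.e., 5/6 < 9/8. -/

import Mathlib

open MeasureTheory Matrix

/-- The uniform kernel (= its `p = 1` equivalent kernel). -/
noncomputable def unifK (u : ℝ) : ℝ := if |u| < 1 then 1 / 2 else 0

/-- The bias constant `C = ∫ w(u) u² du` for the uniform kernel, `p = 1`. -/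
noncomputable def unifC : ℝ := ∫ u : ℝ, unifK u * u ^ 2

/-- The order-2 Gram matrix `G₂ = ∫ r₂ r₂ᵀ K`. -/
noncomputable def unifG2 : Matrix (Fin 3) (Fin 3) ℝ :=
  Matrix.of fun i j => ∫ u : ℝ, u ^ ((i : ℕ) + (j : ℕ)) * unifK u

/-- The GP-bootstrap bias-estimator equivalent kernel `w_GPbc = C·e₂ᵀG₂⁻¹r₂(u)K(u)`. -/
noncomputable def unifWGPbc (u : ℝ) : ℝ :=
  unifC * (∑ j : Fin 3, unifG2⁻¹ 2 j * u ^ (j : ℕ)) * unifK u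

/-- The RBC equivalent kernel `w_RBC = w − w_GPbc`. -/
noncomputable def unifWRBC (u : ℝ) : ℝ := unifK u - unifWGPbc u

lemma unifK_indicator (n : ℕ) (u : ℝ) :
    u ^ n * unifK u = Set.indicator (Set.Ioo (-1 : ℝ) 1) (fun u => u ^ n * (1 / 2)) u := by
  by_cases h : |u| < 1
  · rw [Set.indicator_of_mem (by simpa [Set.mem_Ioo] using abs_lt.mp h)]
    simp [unifK, h]
  · rw [Set.indicator_of_notMem (by simpa [Set.mem_Ioo, ← abs_lt] using h)]
    simp [unifK, h]

lemma moment (n : ℕ) :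
    (∫ u : ℝ, u ^ n * unifK u) = (1 - (-1 : ℝ) ^ (n + 1)) / (2 * (n + 1)) := by
  have h1 : (∫ u : ℝ, u ^ n * unifK u)
      = ∫ u in Set.Ioo (-1 : ℝ) 1, u ^ n * (1 / 2) := by
    rw [← integral_indicator measurableSet_Ioo]
    exact integral_congr_ae (Filter.Eventually.of_forall (unifK_indicator n))
  rw [h1, ← integral_Ioc_eq_integral_Ioo,
    ← intervalIntegral.integral_of_le (by norm_num : (-1 : ℝ) ≤ 1)]
  rw [intervalIntegral.integral_mul_const, integral_pow]
  have : ((n : ℝ) + 1) ≠ 0 := by positivity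
  field_simp
  ring_nf

lemma G2_eq : unifG2 = !![1, 0, 1/3; 0, 1/3, 0; 1/3, 0, 1/5] := by
  ext i j
  fin_cases i <;> fin_cases j <;>
    simp [unifG2, moment] <;> norm_num

lemma G2inv : unifG2⁻¹ = !![9/4, 0, -15/4; 0, 3, 0; -15/4, 0, 45/4] := by
  apply Matrix.inv_eq_right_inv
  rw [G2_eq]
  ext i j
  fin_cases i <;> fin_cases j <;>
    simp [Matrix.mul_apply, Fin.sum_univ_three, Matrix.one_apply] <;> norm_num

lemma C_eq : unifC = 1/3 := by
  have : unifC = ∫ u : ℝ, u ^ 2 * unifK u := by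
    unfold unifC; congr 1; ext u; ring
  rw [this, moment]; norm_num

lemma wrbc_eq (u : ℝ) :
    unifWRBC u = if |u| < 1 then 9 / 8 - 15 / 8 * u ^ 2 else 0 := by
  unfold unifWRBC unifWGPbc
  rw [C_eq, G2inv]
  simp only [Fin.sum_univ_three, unifK]
  norm_num
  simp only [Matrix.cons_val]
  split_ifs <;> ring

lemma key_integral : (∫ u : ℝ, (unifWRBC u) ^ 2) = 9 / 8 := by
  have h1 : ∀ u : ℝ, (unifWRBC u) ^ 2
      = Set.indicator (Set.Ioo (-1 : ℝ) 1) (fun u => (9/8 - 15/8 * u^2)^2) u := by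
    intro u
    rw [wrbc_eq]
    by_cases h : |u| < 1
    · rw [Set.indicator_of_mem (by simpa [Set.mem_Ioo] using abs_lt.mp h)]
      simp [h]
    · rw [Set.indicator_of_notMem (by simpa [Set.mem_Ioo, ← abs_lt] using h)]
      simp [h]
  rw [integral_congr_ae (Filter.Eventually.of_forall h1),
    integral_indicator measurableSet_Ioo, ← integral_Ioc_eq_integral_Ioo,
    ← intervalIntegral.integral_of_le (by norm_num : (-1 : ℝ) ≤ 1)]
  have hderiv : ∀ x ∈ Set.uIcc (-1 : ℝ) 1,
      HasDerivAt (fun u : ℝ => 45/64 * u^5 - 90/64 * u^3 + 81/64 * u)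
        ((9/8 - 15/8 * x^2)^2) x := by
    intro x _
    have h5 := (hasDerivAt_pow 5 x).const_mul (45/64 : ℝ)
    have h3 := (hasDerivAt_pow 3 x).const_mul (90/64 : ℝ)
    have h1 := (hasDerivAt_id x).const_mul (81/64 : ℝ)
    convert (h5.sub h3).add h1 using 1
    · rfl
    · rfl
    · funext u; simp only [Pi.add_apply, Pi.sub_apply, id]
    · push_cast; ring
  have hint : IntervalIntegrable (fun u : ℝ => (9/8 - 15/8 * u^2)^2)
      volume (-1) 1 := (by fun_prop : Continuous fun u : ℝ => (9/8 - 15/8 * u^2)^2).intervalIntegrable _ _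
  rw [intervalIntegral.integral_eq_sub_of_hasDerivAt hderiv hint]
  norm_num

/-- Uniform kernel, `p = 1`, interior point: explicit form of the RBC equivalent kernel,
`K_RBC = ∫ w_RBC² = 9/8`, and `K_PLP = 5/6 < 9/8 = K_RBC`. -/
theorem uniform_rbc_kernel :
    (∀ u : ℝ, unifWRBC u = if |u| < 1 then 9 / 8 - 15 / 8 * u ^ 2 else 0) ∧
    (∫ u : ℝ, (unifWRBC u) ^ 2) = 9 / 8 ∧
    (5 : ℝ) / 6 < 9 / 8 := by
  exact ⟨wrbc_eq, key_integral, by norm_num⟩
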